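/- If ⟨A, F⟩ is a subdirect product (in the non-indexed sense, with surjective projections) of a family of matrices ⟨A_i, F_i⟩ with F nonempty, and each matrix ⟨A_i, F_i⟩ is reduced (its Leibniz congruence is the identity), then ⟨A, F⟩ is reduced. -/
import Mathlib


/-- An algebraic language: a family of operation symbols indexed by arity.
(Following the paper, there are no nullary symbols; constants are treated as
unary constant operations where needed.) -/
structure Lang : Type 1 where
  ops : ℕ → Type

/-- An algebra for a language `L`. -/
structure Alg (L : Lang) : Type 1 where
  carrier : Type
  interp : ∀ {n : ℕ}, L.ops n → (Fin n → carrier) → carrier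

/-- Terms of the language `L` over a type `V` of variables. -/
inductive Term (L : Lang) (V : Type) : Type
  | var : V → Term L V
  | op : ∀ {n : ℕ}, L.ops n → (Fin n → Term L V) → Term L V

/-- Evaluation of a term in an algebra under an assignment of the variables. -/
def Term.eval {L : Lang} {V : Type} (A : Alg L) (v : V → A.carrier) :
    Term L V → A.carrier
  | .var x => v x
  | .op f ts => A.interp f (fun i => Term.eval A v (ts i))

/-- `θ` is a congruence of the algebra `A`. -/
def IsCongruence {L : Lang} (A : Alg L) (θ : A.carrier → A.carrier → Prop) : Prop :=
  Equivalence θ ∧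
    ∀ (n : ℕ) (f : L.ops n) (x y : Fin n → A.carrier),
      (∀ i, θ (x i) (y i)) → θ (A.interp f x) (A.interp f y)

/-- A relation `θ` is compatible with a subset `F`: related elements are either
both in or both out of `F` (stated one-sidedly; symmetry gives the rest). -/
def Compatible {L : Lang} (A : Alg L) (F : Set A.carrier)
    (θ : A.carrier → A.carrier → Prop) : Prop :=
  ∀ a b : A.carrier, θ a b → a ∈ F → b ∈ F

/-- `θ` is the Leibniz congruence of `F` on `A`: the largest congruence of `A`
compatible with `F`. -/
def IsLeibniz {L : Lang} (A : Alg L) (F : Set A.carrier)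
    (θ : A.carrier → A.carrier → Prop) : Prop :=
  IsCongruence A θ ∧ Compatible A F θ ∧
    ∀ θ', IsCongruence A θ' → Compatible A F θ' → ∀ a b, θ' a b → θ a b

/-- The non-indexed product language of a family of languages: its `n`-ary
symbols are `I`-indexed families of `n`-ary terms of the respective languages. -/
def prodLang {ι : Type} (L : ι → Lang) : Lang where
  ops n := ∀ i, Term (L i) (Fin n)

/-- The non-indexed product of a family of algebras: the family-of-terms
operations act coordinatewise. -/
def prodAlg {ι : Type} {L : ι → Lang} (A : ∀ i, Alg (L i)) : Alg (prodLang L) where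
  carrier := ∀ i, (A i).carrier
  interp f x i := Term.eval (A i) (fun k => x k i) (f i)

/-- A subset `S` of an algebra is closed under the operations. -/
def OpClosed {L : Lang} (A : Alg L) (S : Set A.carrier) : Prop :=
  ∀ (n : ℕ) (f : L.ops n) (x : Fin n → A.carrier),
    (∀ i, x i ∈ S) → A.interp f x ∈ S

/-- The subalgebra of `A` with universe the closed subset `S`. -/
def subAlg {L : Lang} (A : Alg L) (S : Set A.carrier) (h : OpClosed A S) :
    Alg L where
  carrier := {x // x ∈ S}
  interp f x := ⟨A.interp f (fun i => (x i).1), h _ f _ (fun i => (x i).2)⟩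

/-- a subdirect product (non-indexed sense, surjective
projections, nonempty filter) of reduced matrices is reduced: if the Leibniz
congruence of each `⟨A i, Fi i⟩` is the identity, then any Leibniz congruence
of the subdirect product matrix is the identity. -/
theorem subdirect_product_of_reduced_is_reduced
    {ι : Type} {L : ι → Lang} (A : ∀ i, Alg (L i))
    (Fi : ∀ i, Set (A i).carrier)
    (S : Set (prodAlg A).carrier) (hS : OpClosed (prodAlg A) S)
    (hsurj : ∀ i, Function.Surjective
      (fun s : (subAlg (prodAlg A) S hS).carrier => s.1 i))
    (hne : ∃ s : (subAlg (prodAlg A) S hS).carrier, ∀ i, s.1 i ∈ Fi i)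
    (hred : ∀ i, IsLeibniz (A i) (Fi i) (fun a b => a = b)) :
    ∀ θ, IsLeibniz (subAlg (prodAlg A) S hS)
        {s : (subAlg (prodAlg A) S hS).carrier | ∀ i, s.1 i ∈ Fi i} θ →
      ∀ a c : (subAlg (prodAlg A) S hS).carrier, θ a c → a = c := by
  classical
  intro θ hθ a c hac
  obtain ⟨⟨hEq, hOp⟩, hComp, -⟩ := hθ
  have key : ∀ i, a.1 i = c.1 i := by
    intro i
    -- the binary "patching" operation for coordinate `i`
    set H : (prodLang L).ops 2 :=
      Function.update (fun j => (Term.var 1 : Term (L j) (Fin 2))) i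
        (Term.var 0) with hHdef
    have Hi : ∀ u v : (subAlg (prodAlg A) S hS).carrier,
        ((subAlg (prodAlg A) S hS).interp H ![u, v]).1 i = u.1 i := by
      intro u v
      show Term.eval (A i) (fun k => ((![u, v]) k).1 i) (H i) = u.1 i
      rw [hHdef, Function.update_self]
      simp [Term.eval]
    have Hj : ∀ (u v : (subAlg (prodAlg A) S hS).carrier) j, j ≠ i →
        ((subAlg (prodAlg A) S hS).interp H ![u, v]).1 j = v.1 j := by
      intro u v j hj
      show Term.eval (A j) (fun k => ((![u, v]) k).1 j) (H j) = v.1 j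
      rw [hHdef, Function.update_of_ne hj]
      simp [Term.eval]
    have Hrel : ∀ u v p q : (subAlg (prodAlg A) S hS).carrier, θ u v → θ p q →
        θ ((subAlg (prodAlg A) S hS).interp H ![u, p])
          ((subAlg (prodAlg A) S hS).interp H ![v, q]) := by
      intro u v p q huv hpq
      apply hOp 2 H
      intro k
      fin_cases k
      · simpa using huv
      · simpa using hpq
    -- the projection of θ to coordinate i
    set θi : (A i).carrier → (A i).carrier → Prop :=
      fun x y => ∃ u v : (subAlg (prodAlg A) S hS).carrier,
        θ u v ∧ u.1 i = x ∧ v.1 i = y with hθidef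
    have hrefl : ∀ x, θi x x := by
      intro x
      obtain ⟨u, hu⟩ := hsurj i x
      exact ⟨u, u, hEq.refl u, hu, hu⟩
    have hcong : IsCongruence (A i) θi := by
      constructor
      · refine ⟨hrefl, ?_, ?_⟩
        · rintro x y ⟨u, v, huv, hu, hv⟩
          exact ⟨v, u, hEq.symm huv, hv, hu⟩
        · rintro x y z ⟨u, v, huv, hu, hv⟩ ⟨p, q, hpq, hp, hq⟩
          refine ⟨(subAlg (prodAlg A) S hS).interp H ![u, p], q, ?_, by rw [Hi, hu], hq⟩
          have h1 := Hrel u v p p huv (hEq.refl p)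
          have h2 : (subAlg (prodAlg A) S hS).interp H ![v, p] = p := by
            apply Subtype.ext; funext j
            by_cases hj : j = i
            · subst hj; rw [Hi, hv, hp]
            · exact Hj v p j hj
          rw [h2] at h1
          exact hEq.trans h1 hpq
      · intro n g x y hxy
        rcases n with _ | m
        · have hxy' : x = y := funext fun k => Fin.elim0 k
          subst hxy'
          exact hrefl _
        · choose u v huv hu hv using hxy
          set G : (prodLang L).ops (m + 1) :=
            Function.update (fun j => (Term.var 0 : Term (L j) (Fin (m + 1)))) i
              (Term.op g fun k => Term.var k) with hGdef
          refine ⟨(subAlg (prodAlg A) S hS).interp G u,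
            (subAlg (prodAlg A) S hS).interp G v, hOp _ G u v huv, ?_, ?_⟩
          · show Term.eval (A i) (fun k => (u k).1 i) (G i) = (A i).interp g x
            rw [hGdef, Function.update_self]
            show (A i).interp g (fun k => (u k).1 i) = (A i).interp g x
            congr 1
            funext k
            exact hu k
          · show Term.eval (A i) (fun k => (v k).1 i) (G i) = (A i).interp g y
            rw [hGdef, Function.update_self]
            show (A i).interp g (fun k => (v k).1 i) = (A i).interp g y
            congr 1
            funext k
            exact hv k
    have hcompat : Compatible (A i) (Fi i) θi := by
      rintro x y ⟨u, v, huv, hu, hv⟩ hx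
      obtain ⟨s, hs⟩ := hne
      have h1 := Hrel u v s s huv (hEq.refl s)
      have h2 : (subAlg (prodAlg A) S hS).interp H ![u, s] ∈
          {t : (subAlg (prodAlg A) S hS).carrier | ∀ j, t.1 j ∈ Fi j} := by
        intro j
        by_cases hj : j = i
        · subst hj; rw [Hi, hu]; exact hx
        · rw [Hj u s j hj]; exact hs j
      have h3 := hComp _ _ h1 h2 i
      rwa [Hi, hv] at h3
    exact (hred i).2.2 θi hcong hcompat (a.1 i) (c.1 i) ⟨a, c, hac, rfl, rfl⟩
  exact Subtype.ext (funext key)
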